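/- Let n be an even positive integer, let b be an integer with 2 ≤ b < n/2, and set t = n/2 + b. Assume that for every integer p with 1 ≤ p < n and gcd(p, n) = 1 we have n/2 < p + (p·t mod n) < 3n/2. Then every integer p with 1 ≤ p < n and gcd(p, n) = 1 satisfies b·p < n/2 or b·p > n − p. -/

import Mathlib

/-- If `n` is even, `t = n/2 + b` with `2 ≤ b < n/2`, and the Kenyon–Smillie
condition holds (with `s = 1`), then every `p` coprime to `n` with `1 ≤ p < n`
satisfies `bp < n/2` or `bp > n − p`. -/
theorem bp_lt_or_gt (n b t : ℤ) (hn : 0 < n) (heven : Even n)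
    (hb : 2 ≤ b) (hbn : (b : ℚ) < (n : ℚ) / 2) (ht : t = n / 2 + b)
    (h : ∀ p : ℤ, 1 ≤ p → p < n → Int.gcd p n = 1 →
      (n : ℚ) / 2 < (p : ℚ) + (((p * t) % n : ℤ) : ℚ) ∧
      (p : ℚ) + (((p * t) % n : ℤ) : ℚ) < 3 * n / 2) :
    ∀ p : ℤ, 1 ≤ p → p < n → Int.gcd p n = 1 →
      ((b * p : ℤ) : ℚ) < (n : ℚ) / 2 ∨ ((b * p : ℤ) : ℚ) > (n : ℚ) - (p : ℚ) := by
  intro p hp1 hpn hgcd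
  by_contra hcon
  push_neg at hcon
  obtain ⟨h1, h2⟩ := hcon
  obtain ⟨m, hm⟩ := heven
  have hm2 : n = 2 * m := by omega
  have hnq : (n : ℚ) / 2 = (m : ℚ) := by rw [hm2]; push_cast; ring
  rw [hnq] at h1
  have h1' : (m : ℤ) ≤ b * p := by exact_mod_cast h1
  have h2' : b * p ≤ n - p := by exact_mod_cast h2
  -- p is odd
  have hpodd : p % 2 = 1 := by
    rcases Int.emod_two_eq p with he | he
    · exfalso
      have h2p : (2 : ℤ) ∣ p := Int.dvd_of_emod_eq_zero he
      have h2n : (2 : ℤ) ∣ n := ⟨m, hm2⟩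
      have hd : (2 : ℤ) ∣ (Int.gcd p n : ℤ) := Int.dvd_coe_gcd h2p h2n
      rw [hgcd] at hd
      norm_num at hd
    · exact he
  obtain ⟨k, hpk⟩ : ∃ k, p = 2 * k + 1 := ⟨p / 2, by omega⟩
  have htm : t = m + b := by omega
  have key : p * t % n = b * p - m := by
    have heq : p * t = (b * p - m) + n * (k + 1) := by
      rw [htm, hpk, hm2]; ring
    rw [heq, Int.add_mul_emod_self_left]
    exact Int.emod_eq_of_lt (by omega) (by omega)
  obtain ⟨hA, _⟩ := h p hp1 hpn hgcd
  rw [key, hnq] at hA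
  have hA' : (m : ℤ) < p + (b * p - m) := by exact_mod_cast hA
  omega
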